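/- Let X be a locally compact Hausdorff space and let φ : ℂ × ℂ → [0,∞) be a continuous map satisfying (inc). Let f, g ∈ C₀(X) and let r, s > 0 be real numbers such that φ(f(x), g(x)) < φ(r,s) for every x ∈ X. Then sup_{x ∈ X} φ(f(x), g(x)) < φ(r,s), i.e., ‖φ(f,g)‖_X < φ(r,s). -/

import Mathlib

open scoped ZeroAtInfty Pointwise
open Filter Topology

set_option maxHeartbeats 1000000
set_option synthInstance.maxHeartbeats 1000000

/-- The (inc) property for a two-variable function `φ : ℂ → ℂ → ℝ`. -/
def IncProp (φ : ℂ → ℂ → ℝ) : Prop :=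
  (∀ s₁ s₂ t : ℂ, ‖s₁‖ ≤ ‖s₂‖ →
      φ s₁ t ≤ φ s₂ t ∧ φ t s₁ ≤ φ t s₂) ∧
  (∀ s₁ s₂ t : ℂ, ‖s₁‖ < ‖s₂‖ → t ≠ 0 →
      φ s₁ t < φ s₂ t ∧ φ t s₁ < φ t s₂)

/-- The (con) property. -/
def ConProp (φ : ℂ → ℂ → ℝ) : Prop :=
  ∀ (n : ℕ), 0 < n → ∀ (s : Fin n → ℂ) (t : ℂ),
    φ ((1 / (n : ℂ)) * ∑ i, s i) t ≤ (1 / (n : ℝ)) * ∑ i, φ (s i) t ∧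
    φ t ((1 / (n : ℂ)) * ∑ i, s i) ≤ (1 / (n : ℝ)) * ∑ i, φ t (s i)

/-- sup of φ(f,g) over the space (the supremum norm of the nonnegative function φ(f,g)). -/
noncomputable def supPhi {X : Type*} (φ : ℂ → ℂ → ℝ) (f g : X → ℂ) : ℝ :=
  ⨆ x, φ (f x) (g x)

noncomputable def rhoPlus {X : Type*} (φ : ℂ → ℂ → ℝ) (f g : X → ℂ) : ℝ :=
  supPhi φ f g + supPhi φ g f

noncomputable def rhoMax {X : Type*} (φ : ℂ → ℂ → ℝ) (f g : X → ℂ) : ℝ :=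
  max (supPhi φ f g) (supPhi φ g f)

noncomputable def rhoPlusScalar (φ : ℂ → ℂ → ℝ) (r s : ℂ) : ℝ := φ r s + φ s r

noncomputable def rhoMaxScalar (φ : ℂ → ℂ → ℝ) (r s : ℂ) : ℝ := max (φ r s) (φ s r)

/-- Generic ρ, with a Boolean selecting between ρ₊ (true) and ρ_max (false). -/
noncomputable def rhoGen {X : Type*} (c : Bool) (φ : ℂ → ℂ → ℝ) (f g : X → ℂ) : ℝ :=
  if c then rhoPlus φ f g else rhoMax φ f g

noncomputable def rhoGenScalar (c : Bool) (φ : ℂ → ℂ → ℝ) (r s : ℂ) : ℝ :=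
  if c then rhoPlusScalar φ r s else rhoMaxScalar φ r s

/-- `x₀` is a strong boundary point of `A ⊆ C₀(X)`. -/
def IsStrongBoundaryPoint {X : Type*} [TopologicalSpace X]
    (A : Set C₀(X, ℂ)) (x₀ : X) : Prop :=
  ∀ ε > (0 : ℝ), ∀ V ∈ 𝓝 x₀, ∃ f ∈ A, f x₀ = 1 ∧ ‖f‖ = 1 ∧
    ∀ x ∉ V, ‖f x‖ < ε

/-- V_{x₀}(A). -/
def Vset {X : Type*} [TopologicalSpace X] (A : Set C₀(X, ℂ)) (x₀ : X) : Set C₀(X, ℂ) :=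
  {f ∈ A | f x₀ = 1 ∧ ‖f‖ = 1}

/-- F_{x₀}(A). -/
def Fset {X : Type*} [TopologicalSpace X] (A : Set C₀(X, ℂ)) (x₀ : X) : Set C₀(X, ℂ) :=
  {f ∈ A | ‖f x₀‖ = 1 ∧ ‖f‖ = 1}

/-- The maximum modulus set M(f). -/
def maxSet {X : Type*} [TopologicalSpace X] (f : C₀(X, ℂ)) : Set X :=
  {x | ‖f x‖ = ‖f‖}

noncomputable instance instSeminormedAddCommGroupStrongDualZeroAtInfty {X : Type*} [TopologicalSpace X]
    (𝒜 : Submodule ℂ C₀(X, ℂ)) : SeminormedAddCommGroup (StrongDual ℂ 𝒜) :=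
  @ContinuousLinearMap.toSeminormedAddCommGroup ℂ ℂ 𝒜 ℂ _ _ _ _ _ _ (RingHom.id ℂ) _

/-- Evaluation at a point, as a continuous linear functional on a subspace of C₀(X). -/
noncomputable def evalDual {X : Type*} [TopologicalSpace X]
    (𝒜 : Submodule ℂ C₀(X, ℂ)) (x : X) : StrongDual ℂ 𝒜 :=
  LinearMap.mkContinuous (𝕜 := ℂ) (E := 𝒜)
    { toFun := fun f => (f : C₀(X, ℂ)) x
      map_add' := fun f g => rfl
      map_smul' := fun c f => rfl }
    1
    (fun f => by
      rw [one_mul, ← Submodule.norm_coe]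
      exact ((f : C₀(X, ℂ)).toBCF.norm_coe_le_norm x).trans_eq
        ZeroAtInftyContinuousMap.norm_toBCF_eq_norm)

/-- `x` lies in the Choquet boundary of a subspace `𝒜` of `C₀(X)`: the evaluation functional is
an extreme point of the closed unit ball of the dual space. -/
def InChoquetBoundary {X : Type*} [TopologicalSpace X]
    (𝒜 : Submodule ℂ C₀(X, ℂ)) (x : X) : Prop :=
  evalDual 𝒜 x ∈
    Set.extremePoints ℝ (Metric.closedBall (0 : StrongDual ℂ 𝒜) 1)

/-- A function algebra on `X`: a closed subalgebra of `C₀(X)` strongly separating points. -/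
def IsFunctionAlgebra {X : Type*} [TopologicalSpace X]
    (𝒜 : NonUnitalSubalgebra ℂ C₀(X, ℂ)) : Prop :=
  IsClosed (𝒜 : Set C₀(X, ℂ)) ∧
  (∀ x y : X, x ≠ y → ∃ f ∈ 𝒜, f x ≠ f y) ∧
  (∀ x : X, ∃ g ∈ 𝒜, g x ≠ (0 : ℂ))

/-- `|A| ⊆ |𝒜|`. -/
def ModulusSubset {X : Type*} [TopologicalSpace X]
    (A 𝒜 : Set C₀(X, ℂ)) : Prop :=
  ∀ f ∈ A, ∃ g ∈ 𝒜, ∀ x, ‖f x‖ = ‖g x‖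

/-- The positive elements of a subset `S` of `C₀(X)`. -/
def posPart {X : Type*} [TopologicalSpace X] (S : Set C₀(X, ℂ)) : Set C₀(X, ℂ) :=
  {f ∈ S | ∀ x, ∃ r : ℝ, 0 ≤ r ∧ f x = r}

theorem stmt2 {X : Type*} [TopologicalSpace X] [LocallyCompactSpace X] [T2Space X]
    (φ : ℂ → ℂ → ℝ) (hφc : Continuous fun p : ℂ × ℂ => φ p.1 p.2)
    (hφ0 : ∀ s t : ℂ, 0 ≤ φ s t) (hinc : IncProp φ)
    (f g : C₀(X, ℂ)) (r s : ℝ) (hr : 0 < r) (hs : 0 < s)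
    (h : ∀ x : X, φ (f x) (g x) < φ (r : ℂ) (s : ℂ)) :
    supPhi φ (fun x => f x) (fun x => g x) < φ (r : ℂ) (s : ℂ) := by
  -- Bound outside a compact set by φ(r/2, s/2)
  set c : ℝ := φ ((r/2 : ℝ) : ℂ) ((s/2 : ℝ) : ℂ) with hc_def
  have habs : ∀ t : ℝ, 0 < t → ‖((t/2 : ℝ) : ℂ)‖ < ‖((t : ℝ) : ℂ)‖ := by
    intro t ht
    simp only [Complex.norm_real, Real.norm_eq_abs]
    rw [abs_of_pos (by linarith), abs_of_pos ht]
    linarith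
  have hc_lt : c < φ (r : ℂ) (s : ℂ) := by
    have h1 : c < φ (r : ℂ) ((s/2 : ℝ) : ℂ) :=
      (hinc.2 ((r/2 : ℝ) : ℂ) (r : ℂ) ((s/2 : ℝ) : ℂ) (habs r hr)
        (Complex.ofReal_ne_zero.mpr (by positivity))).1
    have h2 : φ (r : ℂ) ((s/2 : ℝ) : ℂ) ≤ φ (r : ℂ) (s : ℂ) := by
      refine (hinc.1 ((s/2 : ℝ) : ℂ) (s : ℂ) (r : ℂ) ?_).2
      exact le_of_lt (habs s hs)
    linarith
  have hc0 : 0 ≤ c := hφ0 _ _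
  -- compact set
  have hf : Filter.Tendsto (fun x => f x) (Filter.cocompact X) (𝓝 0) := f.zero_at_infty'
  have hg : Filter.Tendsto (fun x => g x) (Filter.cocompact X) (𝓝 0) := g.zero_at_infty'
  have hev : ∀ᶠ x in Filter.cocompact X,
      ‖f x‖ ≤ r/2 ∧ ‖g x‖ ≤ s/2 := by
    have h1 := Metric.tendsto_nhds.mp hf (r/2) (by positivity)
    have h2 := Metric.tendsto_nhds.mp hg (s/2) (by positivity)
    filter_upwards [h1, h2] with x hx1 hx2
    rw [Complex.dist_eq, sub_zero] at hx1 hx2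
    exact ⟨le_of_lt hx1, le_of_lt hx2⟩
  obtain ⟨K, hKc, hKsub⟩ := Filter.mem_cocompact.mp hev
  -- bound off K
  have hoff : ∀ x ∉ K, φ (f x) (g x) ≤ c := by
    intro x hx
    have hx' := hKsub hx
    have h1 : φ (f x) (g x) ≤ φ ((r/2 : ℝ) : ℂ) (g x) := by
      refine (hinc.1 (f x) ((r/2 : ℝ) : ℂ) (g x) ?_).1
      rw [Complex.norm_real, Real.norm_eq_abs, abs_of_pos (by positivity)]; exact hx'.1
    have h2 : φ ((r/2 : ℝ) : ℂ) (g x) ≤ c := by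
      refine (hinc.1 (g x) ((s/2 : ℝ) : ℂ) ((r/2 : ℝ) : ℂ) ?_).2
      rw [Complex.norm_real, Real.norm_eq_abs, abs_of_pos (by positivity)]; exact hx'.2
    linarith
  rcases K.eq_empty_or_nonempty with hK | hK
  · -- K empty
    have : supPhi φ (fun x => f x) (fun x => g x) ≤ c :=
      Real.iSup_le (fun x => hoff x (by simp [hK])) hc0
    linarith
  · obtain ⟨x₀, hx₀K, hx₀⟩ := hKc.exists_isMaxOn hK
      ((hφc.comp ((map_continuous f).prodMk (map_continuous g))).continuousOn)
    have hb : supPhi φ (fun x => f x) (fun x => g x) ≤ max c (φ (f x₀) (g x₀)) := by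
      refine Real.iSup_le (fun x => ?_) (le_max_of_le_left hc0)
      by_cases hxK : x ∈ K
      · exact le_max_of_le_right (hx₀ hxK)
      · exact le_max_of_le_left (hoff x hxK)
    exact lt_of_le_of_lt hb (max_lt hc_lt (h x₀))
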